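/- Let (X,d) be an Ahlfors regular length space of dimension λ up to R, i.e., k·r^λ ≤ H^λ(B(x,r)) ≤ K·r^λ for all 0 < r < R with constants 0 < k ≤ K < ∞. Then there exists k' > 0 such that for all a, x ∈ X and all r, ρ > 0 with r < R, r ≤ ρ and d(x,a) ≤ ρ, one has k'·r^λ ≤ H^λ(B(x,r) ∩ B(a,ρ)). -/
import Mathlib


open MeasureTheory Set
open scoped ENNReal

/-- A metric space is a length space if every pair of points is joined by an
isometric map of the interval `[0, dist x y]` realizing the distance. -/
def IsLengthSpace (X : Type*) [MetricSpace X] : Prop :=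
  ∀ x y : X, ∃ f : ℝ → X, f 0 = x ∧ f (dist x y) = y ∧
    ∀ s ∈ Set.Icc (0 : ℝ) (dist x y), ∀ t ∈ Set.Icc (0 : ℝ) (dist x y),
      dist (f s) (f t) = |s - t|

theorem stmt_5 {X : Type*} [MetricSpace X] [MeasurableSpace X] [BorelSpace X]
    (hX : IsLengthSpace X) (l R k K : ℝ)
    (hl : 0 < l) (hR : 0 < R) (hk : 0 < k) (hkK : k ≤ K)
    (hreg : ∀ (x : X) (r : ℝ), 0 < r → r < R →
      ENNReal.ofReal (k * r ^ l) ≤ μH[l] (Metric.ball x r) ∧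
      μH[l] (Metric.ball x r) ≤ ENNReal.ofReal (K * r ^ l)) :
    ∃ k' : ℝ, 0 < k' ∧ ∀ (a x : X) (r ρ : ℝ), 0 < r → 0 < ρ → r < R → r ≤ ρ →
      dist x a ≤ ρ →
      ENNReal.ofReal (k' * r ^ l) ≤ μH[l] (Metric.ball x r ∩ Metric.ball a ρ) := by
  refine ⟨k / 4 ^ l, by positivity, ?_⟩
  intro a x r ρ hr hρ hrR hrρ hd
  obtain ⟨y, hy⟩ : ∃ y : X, Metric.ball y (r / 4) ⊆ Metric.ball x r ∩ Metric.ball a ρ := by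
    by_cases hcase : dist x a ≤ ρ - r / 4
    · refine ⟨x, fun z hz => ?_⟩
      rw [Metric.mem_ball] at hz
      refine ⟨Metric.mem_ball.2 (by linarith), Metric.mem_ball.2 ?_⟩
      calc dist z a ≤ dist z x + dist x a := dist_triangle _ _ _
        _ < ρ := by linarith
    · push_neg at hcase
      obtain ⟨f, hf0, hfd, hiso⟩ := hX x a
      have hd2 : r / 2 ≤ dist x a := by linarith
      have hmem : r / 2 ∈ Set.Icc (0 : ℝ) (dist x a) := ⟨by linarith, hd2⟩
      have hmem0 : (0 : ℝ) ∈ Set.Icc (0 : ℝ) (dist x a) := ⟨le_refl _, dist_nonneg⟩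
      have hmemd : dist x a ∈ Set.Icc (0 : ℝ) (dist x a) := ⟨dist_nonneg, le_refl _⟩
      have hxy : dist x (f (r / 2)) = r / 2 := by
        have := hiso 0 hmem0 (r / 2) hmem
        rw [hf0] at this
        rw [this, abs_of_nonpos (by linarith)]; ring
      have hya : dist (f (r / 2)) a = dist x a - r / 2 := by
        have := hiso (r / 2) hmem (dist x a) hmemd
        rw [hfd] at this
        rw [this, abs_of_nonpos (by linarith)]; ring
      refine ⟨f (r / 2), fun z hz => ?_⟩
      rw [Metric.mem_ball] at hz
      refine ⟨Metric.mem_ball.2 ?_, Metric.mem_ball.2 ?_⟩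
      · calc dist z x ≤ dist z (f (r / 2)) + dist (f (r / 2)) x := dist_triangle _ _ _
          _ < r := by rw [dist_comm (f (r / 2)) x, hxy]; linarith
      · calc dist z a ≤ dist z (f (r / 2)) + dist (f (r / 2)) a := dist_triangle _ _ _
          _ < ρ := by rw [hya]; linarith
  calc ENNReal.ofReal (k / 4 ^ l * r ^ l)
      = ENNReal.ofReal (k * (r / 4) ^ l) := by
        rw [Real.div_rpow hr.le (by norm_num : (0:ℝ) ≤ 4)]
        ring_nf
    _ ≤ μH[l] (Metric.ball y (r / 4)) :=
        (hreg y (r / 4) (by linarith) (by linarith)).1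
    _ ≤ _ := measure_mono hy
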